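/- arXiv:2210.13216 — 8 statements merged into one kernel-verified Lean document; each statement's English description precedes it below -/
import Mathlib

section
/- For every integer m ≥ 1 and every real κ with 0 < κ < 1, the polynomial r̃(m,κ) = 262144κ⁴m¹⁰ + (516096κ⁴+679936κ³)m⁹ + (373760κ⁴+1233920κ³+675840κ²)m⁸ + (−275904κ⁴+1151040κ³+1143744κ²+308160κ)m⁷ + (−926496κ⁴+248832κ³+1432512κ²+507456κ+54432)m⁶ + (−800496κ⁴−1256256κ³+1472688κ²+857520κ+92016)m⁵ + (−281880κ⁴−1525392κ³+266328κ²+1353024κ+199584)m⁴ + (−33048κ⁴−644436κ³−672624κ²+957420κ+375192)m³ + (−90396κ³−433026κ²+186624κ+333882)m² + (−74358κ²−59049κ+133407)m + 19683(1−κ) is strictly positive. -/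
set_option maxHeartbeats 4000000 in
/-- Positivity of the resultant factor r̃(m,κ) for integer m ≥ 1 and 0 < κ < 1. -/
theorem rtilde_pos (m : ℕ) (hm : 1 ≤ m) (κ : ℝ) (h0 : 0 < κ) (h1 : κ < 1) :
    0 < 262144*κ^4*(m:ℝ)^10 + (516096*κ^4+679936*κ^3)*(m:ℝ)^9
      + (373760*κ^4+1233920*κ^3+675840*κ^2)*(m:ℝ)^8
      + (-275904*κ^4+1151040*κ^3+1143744*κ^2+308160*κ)*(m:ℝ)^7
      + (-926496*κ^4+248832*κ^3+1432512*κ^2+507456*κ+54432)*(m:ℝ)^6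
      + (-800496*κ^4-1256256*κ^3+1472688*κ^2+857520*κ+92016)*(m:ℝ)^5
      + (-281880*κ^4-1525392*κ^3+266328*κ^2+1353024*κ+199584)*(m:ℝ)^4
      + (-33048*κ^4-644436*κ^3-672624*κ^2+957420*κ+375192)*(m:ℝ)^3
      + (-90396*κ^3-433026*κ^2+186624*κ+333882)*(m:ℝ)^2
      + (-74358*κ^2-59049*κ+133407)*(m:ℝ)
      + 19683*(1-κ) := by
  obtain ⟨n, rfl⟩ := Nat.exists_eq_add_of_le hm
  have hb : (0:ℝ) < 1 - κ := by linarith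
  have hn : (0:ℝ) ≤ (n:ℝ) := Nat.cast_nonneg n
  have hmc : ((1 + n : ℕ) : ℝ) = 1 + (n:ℝ) := by push_cast; ring
  rw [hmc]
  have key : 262144*κ^4*(1+(n:ℝ))^10 + (516096*κ^4+679936*κ^3)*(1+(n:ℝ))^9
      + (373760*κ^4+1233920*κ^3+675840*κ^2)*(1+(n:ℝ))^8
      + (-275904*κ^4+1151040*κ^3+1143744*κ^2+308160*κ)*(1+(n:ℝ))^7
      + (-926496*κ^4+248832*κ^3+1432512*κ^2+507456*κ+54432)*(1+(n:ℝ))^6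
      + (-800496*κ^4-1256256*κ^3+1472688*κ^2+857520*κ+92016)*(1+(n:ℝ))^5
      + (-281880*κ^4-1525392*κ^3+266328*κ^2+1353024*κ+199584)*(1+(n:ℝ))^4
      + (-33048*κ^4-644436*κ^3-672624*κ^2+957420*κ+375192)*(1+(n:ℝ))^3
      + (-90396*κ^3-433026*κ^2+186624*κ+333882)*(1+(n:ℝ))^2
      + (-74358*κ^2-59049*κ+133407)*(1+(n:ℝ))
      + 19683*(1-κ)
      = 1208196*(n:ℝ)^0*κ^0*(1-κ)^4 + 8924256*(n:ℝ)^0*κ^1*(1-κ)^3 + 23334696*(n:ℝ)^0*κ^2*(1-κ)^2 + 24526656*(n:ℝ)^0*κ^3*(1-κ)^1 + 7742196*(n:ℝ)^0*κ^4*(1-κ)^0 + 3511755*(n:ℝ)^1*κ^0*(1-κ)^4 + 32135031*(n:ℝ)^1*κ^1*(1-κ)^3 + 102813033*(n:ℝ)^1*κ^2*(1-κ)^2 + 134312101*(n:ℝ)^1*κ^3*(1-κ)^1 + 57659280*(n:ℝ)^1*κ^4*(1-κ)^0 + 4393602*(n:ℝ)^2*κ^0*(1-κ)^4 + 51409836*(n:ℝ)^2*κ^1*(1-κ)^3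 + 206171670*(n:ℝ)^2*κ^2*(1-κ)^2 + 338881400*(n:ℝ)^2*κ^3*(1-κ)^1 + 191080372*(n:ℝ)^2*κ^4*(1-κ)^0 + 3182328*(n:ℝ)^3*κ^0*(1-κ)^4 + 48608748*(n:ℝ)^3*κ^1*(1-κ)^3 + 248380164*(n:ℝ)^3*κ^2*(1-κ)^2 + 515832016*(n:ℝ)^3*κ^3*(1-κ)^1 + 371266088*(n:ℝ)^3*κ^4*(1-κ)^0 + 1476144*(n:ℝ)^4*κ^0*(1-κ)^4 + 29942640*(n:ℝ)^4*κ^1*(1-κ)^3 + 197428344*(n:ℝ)^4*κ^2*(1-κ)^2 + 519191888*(n:ℝ)^4*κ^3*(1-κ)^1 + 468633136*(n:ℝ)^4*κ^4*(1-κ)^0 + 418608*(n:ℝ)^5*κ^0*(1-κ)^4 + 12048048*(n:ℝ)^5*κ^1*(1-κ)^3 + 105565920*(n:ℝ)^5*κ^2*(1-κ)^2 + 355842160*(n:ℝ)^5*κ^3*(1-κ)^1 + 401771168*(n:ℝ)^5*κ^4*(1-κ)^0 + 54432*(n:ℝ)^6*κ^0*(1-κ)^4 + 2882304*(n:ℝ)^6*κ^1*(1-κ)^3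 + 36682560*(n:ℝ)^6*κ^2*(1-κ)^2 + 164906432*(n:ℝ)^6*κ^3*(1-κ)^1 + 237061504*(n:ℝ)^6*κ^4*(1-κ)^0 + 308160*(n:ℝ)^7*κ^1*(1-κ)^3 + 7474944*(n:ℝ)^7*κ^2*(1-κ)^2 + 49525504*(n:ℝ)^7*κ^3*(1-κ)^1 + 95109632*(n:ℝ)^7*κ^4*(1-κ)^0 + 675840*(n:ℝ)^8*κ^2*(1-κ)^2 + 8705024*(n:ℝ)^8*κ^3*(1-κ)^1 + 24844288*(n:ℝ)^8*κ^4*(1-κ)^0 + 679936*(n:ℝ)^9*κ^3*(1-κ)^1 + 3817472*(n:ℝ)^9*κ^4*(1-κ)^0 + 262144*(n:ℝ)^10*κ^4*(1-κ)^0 := by ring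
  rw [key]
  have f0 : (0:ℝ) < 1208196*(n:ℝ)^0*κ^0*(1-κ)^4 := by
    have : (0:ℝ) < (1-κ)^4 := pow_pos hb 4
    nlinarith [Nat.cast_nonneg (α:=ℝ) n, this]
  have f1 : (0:ℝ) ≤ 8924256*(n:ℝ)^0*κ^1*(1-κ)^3 := by
    have := mul_nonneg (mul_nonneg (mul_nonneg (by norm_num : (0:ℝ) ≤ 8924256) (pow_nonneg hn 0)) (pow_nonneg h0.le 1)) (pow_nonneg hb.le 3)
    linarith [this]
  have f2 : (0:ℝ) ≤ 23334696*(n:ℝ)^0*κ^2*(1-κ)^2 := by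
    have := mul_nonneg (mul_nonneg (mul_nonneg (by norm_num : (0:ℝ) ≤ 23334696) (pow_nonneg hn 0)) (pow_nonneg h0.le 2)) (pow_nonneg hb.le 2)
    linarith [this]
  have f3 : (0:ℝ) ≤ 24526656*(n:ℝ)^0*κ^3*(1-κ)^1 := by
    have := mul_nonneg (mul_nonneg (mul_nonneg (by norm_num : (0:ℝ) ≤ 24526656) (pow_nonneg hn 0)) (pow_nonneg h0.le 3)) (pow_nonneg hb.le 1)
    linarith [this]
  have f4 : (0:ℝ) ≤ 7742196*(n:ℝ)^0*κ^4*(1-κ)^0 := by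
    have := mul_nonneg (mul_nonneg (mul_nonneg (by norm_num : (0:ℝ) ≤ 7742196) (pow_nonneg hn 0)) (pow_nonneg h0.le 4)) (pow_nonneg hb.le 0)
    linarith [this]
  have f5 : (0:ℝ) ≤ 3511755*(n:ℝ)^1*κ^0*(1-κ)^4 := by
    have := mul_nonneg (mul_nonneg (mul_nonneg (by norm_num : (0:ℝ) ≤ 3511755) (pow_nonneg hn 1)) (pow_nonneg h0.le 0)) (pow_nonneg hb.le 4)
    linarith [this]
  have f6 : (0:ℝ) ≤ 32135031*(n:ℝ)^1*κ^1*(1-κ)^3 := by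
    have := mul_nonneg (mul_nonneg (mul_nonneg (by norm_num : (0:ℝ) ≤ 32135031) (pow_nonneg hn 1)) (pow_nonneg h0.le 1)) (pow_nonneg hb.le 3)
    linarith [this]
  have f7 : (0:ℝ) ≤ 102813033*(n:ℝ)^1*κ^2*(1-κ)^2 := by
    have := mul_nonneg (mul_nonneg (mul_nonneg (by norm_num : (0:ℝ) ≤ 102813033) (pow_nonneg hn 1)) (pow_nonneg h0.le 2)) (pow_nonneg hb.le 2)
    linarith [this]
  have f8 : (0:ℝ) ≤ 134312101*(n:ℝ)^1*κ^3*(1-κ)^1 := by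
    have := mul_nonneg (mul_nonneg (mul_nonneg (by norm_num : (0:ℝ) ≤ 134312101) (pow_nonneg hn 1)) (pow_nonneg h0.le 3)) (pow_nonneg hb.le 1)
    linarith [this]
  have f9 : (0:ℝ) ≤ 57659280*(n:ℝ)^1*κ^4*(1-κ)^0 := by
    have := mul_nonneg (mul_nonneg (mul_nonneg (by norm_num : (0:ℝ) ≤ 57659280) (pow_nonneg hn 1)) (pow_nonneg h0.le 4)) (pow_nonneg hb.le 0)
    linarith [this]
  have f10 : (0:ℝ) ≤ 4393602*(n:ℝ)^2*κ^0*(1-κ)^4 := by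
    have := mul_nonneg (mul_nonneg (mul_nonneg (by norm_num : (0:ℝ) ≤ 4393602) (pow_nonneg hn 2)) (pow_nonneg h0.le 0)) (pow_nonneg hb.le 4)
    linarith [this]
  have f11 : (0:ℝ) ≤ 51409836*(n:ℝ)^2*κ^1*(1-κ)^3 := by
    have := mul_nonneg (mul_nonneg (mul_nonneg (by norm_num : (0:ℝ) ≤ 51409836) (pow_nonneg hn 2)) (pow_nonneg h0.le 1)) (pow_nonneg hb.le 3)
    linarith [this]
  have f12 : (0:ℝ) ≤ 206171670*(n:ℝ)^2*κ^2*(1-κ)^2 := by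
    have := mul_nonneg (mul_nonneg (mul_nonneg (by norm_num : (0:ℝ) ≤ 206171670) (pow_nonneg hn 2)) (pow_nonneg h0.le 2)) (pow_nonneg hb.le 2)
    linarith [this]
  have f13 : (0:ℝ) ≤ 338881400*(n:ℝ)^2*κ^3*(1-κ)^1 := by
    have := mul_nonneg (mul_nonneg (mul_nonneg (by norm_num : (0:ℝ) ≤ 338881400) (pow_nonneg hn 2)) (pow_nonneg h0.le 3)) (pow_nonneg hb.le 1)
    linarith [this]
  have f14 : (0:ℝ) ≤ 191080372*(n:ℝ)^2*κ^4*(1-κ)^0 := by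
    have := mul_nonneg (mul_nonneg (mul_nonneg (by norm_num : (0:ℝ) ≤ 191080372) (pow_nonneg hn 2)) (pow_nonneg h0.le 4)) (pow_nonneg hb.le 0)
    linarith [this]
  have f15 : (0:ℝ) ≤ 3182328*(n:ℝ)^3*κ^0*(1-κ)^4 := by
    have := mul_nonneg (mul_nonneg (mul_nonneg (by norm_num : (0:ℝ) ≤ 3182328) (pow_nonneg hn 3)) (pow_nonneg h0.le 0)) (pow_nonneg hb.le 4)
    linarith [this]
  have f16 : (0:ℝ) ≤ 48608748*(n:ℝ)^3*κ^1*(1-κ)^3 := by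
    have := mul_nonneg (mul_nonneg (mul_nonneg (by norm_num : (0:ℝ) ≤ 48608748) (pow_nonneg hn 3)) (pow_nonneg h0.le 1)) (pow_nonneg hb.le 3)
    linarith [this]
  have f17 : (0:ℝ) ≤ 248380164*(n:ℝ)^3*κ^2*(1-κ)^2 := by
    have := mul_nonneg (mul_nonneg (mul_nonneg (by norm_num : (0:ℝ) ≤ 248380164) (pow_nonneg hn 3)) (pow_nonneg h0.le 2)) (pow_nonneg hb.le 2)
    linarith [this]
  have f18 : (0:ℝ) ≤ 515832016*(n:ℝ)^3*κ^3*(1-κ)^1 := by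
    have := mul_nonneg (mul_nonneg (mul_nonneg (by norm_num : (0:ℝ) ≤ 515832016) (pow_nonneg hn 3)) (pow_nonneg h0.le 3)) (pow_nonneg hb.le 1)
    linarith [this]
  have f19 : (0:ℝ) ≤ 371266088*(n:ℝ)^3*κ^4*(1-κ)^0 := by
    have := mul_nonneg (mul_nonneg (mul_nonneg (by norm_num : (0:ℝ) ≤ 371266088) (pow_nonneg hn 3)) (pow_nonneg h0.le 4)) (pow_nonneg hb.le 0)
    linarith [this]
  have f20 : (0:ℝ) ≤ 1476144*(n:ℝ)^4*κ^0*(1-κ)^4 := by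
    have := mul_nonneg (mul_nonneg (mul_nonneg (by norm_num : (0:ℝ) ≤ 1476144) (pow_nonneg hn 4)) (pow_nonneg h0.le 0)) (pow_nonneg hb.le 4)
    linarith [this]
  have f21 : (0:ℝ) ≤ 29942640*(n:ℝ)^4*κ^1*(1-κ)^3 := by
    have := mul_nonneg (mul_nonneg (mul_nonneg (by norm_num : (0:ℝ) ≤ 29942640) (pow_nonneg hn 4)) (pow_nonneg h0.le 1)) (pow_nonneg hb.le 3)
    linarith [this]
  have f22 : (0:ℝ) ≤ 197428344*(n:ℝ)^4*κ^2*(1-κ)^2 := by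
    have := mul_nonneg (mul_nonneg (mul_nonneg (by norm_num : (0:ℝ) ≤ 197428344) (pow_nonneg hn 4)) (pow_nonneg h0.le 2)) (pow_nonneg hb.le 2)
    linarith [this]
  have f23 : (0:ℝ) ≤ 519191888*(n:ℝ)^4*κ^3*(1-κ)^1 := by
    have := mul_nonneg (mul_nonneg (mul_nonneg (by norm_num : (0:ℝ) ≤ 519191888) (pow_nonneg hn 4)) (pow_nonneg h0.le 3)) (pow_nonneg hb.le 1)
    linarith [this]
  have f24 : (0:ℝ) ≤ 468633136*(n:ℝ)^4*κ^4*(1-κ)^0 := by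
    have := mul_nonneg (mul_nonneg (mul_nonneg (by norm_num : (0:ℝ) ≤ 468633136) (pow_nonneg hn 4)) (pow_nonneg h0.le 4)) (pow_nonneg hb.le 0)
    linarith [this]
  have f25 : (0:ℝ) ≤ 418608*(n:ℝ)^5*κ^0*(1-κ)^4 := by
    have := mul_nonneg (mul_nonneg (mul_nonneg (by norm_num : (0:ℝ) ≤ 418608) (pow_nonneg hn 5)) (pow_nonneg h0.le 0)) (pow_nonneg hb.le 4)
    linarith [this]
  have f26 : (0:ℝ) ≤ 12048048*(n:ℝ)^5*κ^1*(1-κ)^3 := by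
    have := mul_nonneg (mul_nonneg (mul_nonneg (by norm_num : (0:ℝ) ≤ 12048048) (pow_nonneg hn 5)) (pow_nonneg h0.le 1)) (pow_nonneg hb.le 3)
    linarith [this]
  have f27 : (0:ℝ) ≤ 105565920*(n:ℝ)^5*κ^2*(1-κ)^2 := by
    have := mul_nonneg (mul_nonneg (mul_nonneg (by norm_num : (0:ℝ) ≤ 105565920) (pow_nonneg hn 5)) (pow_nonneg h0.le 2)) (pow_nonneg hb.le 2)
    linarith [this]
  have f28 : (0:ℝ) ≤ 355842160*(n:ℝ)^5*κ^3*(1-κ)^1 := by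
    have := mul_nonneg (mul_nonneg (mul_nonneg (by norm_num : (0:ℝ) ≤ 355842160) (pow_nonneg hn 5)) (pow_nonneg h0.le 3)) (pow_nonneg hb.le 1)
    linarith [this]
  have f29 : (0:ℝ) ≤ 401771168*(n:ℝ)^5*κ^4*(1-κ)^0 := by
    have := mul_nonneg (mul_nonneg (mul_nonneg (by norm_num : (0:ℝ) ≤ 401771168) (pow_nonneg hn 5)) (pow_nonneg h0.le 4)) (pow_nonneg hb.le 0)
    linarith [this]
  have f30 : (0:ℝ) ≤ 54432*(n:ℝ)^6*κ^0*(1-κ)^4 := by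
    have := mul_nonneg (mul_nonneg (mul_nonneg (by norm_num : (0:ℝ) ≤ 54432) (pow_nonneg hn 6)) (pow_nonneg h0.le 0)) (pow_nonneg hb.le 4)
    linarith [this]
  have f31 : (0:ℝ) ≤ 2882304*(n:ℝ)^6*κ^1*(1-κ)^3 := by
    have := mul_nonneg (mul_nonneg (mul_nonneg (by norm_num : (0:ℝ) ≤ 2882304) (pow_nonneg hn 6)) (pow_nonneg h0.le 1)) (pow_nonneg hb.le 3)
    linarith [this]
  have f32 : (0:ℝ) ≤ 36682560*(n:ℝ)^6*κ^2*(1-κ)^2 := by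
    have := mul_nonneg (mul_nonneg (mul_nonneg (by norm_num : (0:ℝ) ≤ 36682560) (pow_nonneg hn 6)) (pow_nonneg h0.le 2)) (pow_nonneg hb.le 2)
    linarith [this]
  have f33 : (0:ℝ) ≤ 164906432*(n:ℝ)^6*κ^3*(1-κ)^1 := by
    have := mul_nonneg (mul_nonneg (mul_nonneg (by norm_num : (0:ℝ) ≤ 164906432) (pow_nonneg hn 6)) (pow_nonneg h0.le 3)) (pow_nonneg hb.le 1)
    linarith [this]
  have f34 : (0:ℝ) ≤ 237061504*(n:ℝ)^6*κ^4*(1-κ)^0 := by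
    have := mul_nonneg (mul_nonneg (mul_nonneg (by norm_num : (0:ℝ) ≤ 237061504) (pow_nonneg hn 6)) (pow_nonneg h0.le 4)) (pow_nonneg hb.le 0)
    linarith [this]
  have f35 : (0:ℝ) ≤ 308160*(n:ℝ)^7*κ^1*(1-κ)^3 := by
    have := mul_nonneg (mul_nonneg (mul_nonneg (by norm_num : (0:ℝ) ≤ 308160) (pow_nonneg hn 7)) (pow_nonneg h0.le 1)) (pow_nonneg hb.le 3)
    linarith [this]
  have f36 : (0:ℝ) ≤ 7474944*(n:ℝ)^7*κ^2*(1-κ)^2 := by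
    have := mul_nonneg (mul_nonneg (mul_nonneg (by norm_num : (0:ℝ) ≤ 7474944) (pow_nonneg hn 7)) (pow_nonneg h0.le 2)) (pow_nonneg hb.le 2)
    linarith [this]
  have f37 : (0:ℝ) ≤ 49525504*(n:ℝ)^7*κ^3*(1-κ)^1 := by
    have := mul_nonneg (mul_nonneg (mul_nonneg (by norm_num : (0:ℝ) ≤ 49525504) (pow_nonneg hn 7)) (pow_nonneg h0.le 3)) (pow_nonneg hb.le 1)
    linarith [this]
  have f38 : (0:ℝ) ≤ 95109632*(n:ℝ)^7*κ^4*(1-κ)^0 := by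
    have := mul_nonneg (mul_nonneg (mul_nonneg (by norm_num : (0:ℝ) ≤ 95109632) (pow_nonneg hn 7)) (pow_nonneg h0.le 4)) (pow_nonneg hb.le 0)
    linarith [this]
  have f39 : (0:ℝ) ≤ 675840*(n:ℝ)^8*κ^2*(1-κ)^2 := by
    have := mul_nonneg (mul_nonneg (mul_nonneg (by norm_num : (0:ℝ) ≤ 675840) (pow_nonneg hn 8)) (pow_nonneg h0.le 2)) (pow_nonneg hb.le 2)
    linarith [this]
  have f40 : (0:ℝ) ≤ 8705024*(n:ℝ)^8*κ^3*(1-κ)^1 := by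
    have := mul_nonneg (mul_nonneg (mul_nonneg (by norm_num : (0:ℝ) ≤ 8705024) (pow_nonneg hn 8)) (pow_nonneg h0.le 3)) (pow_nonneg hb.le 1)
    linarith [this]
  have f41 : (0:ℝ) ≤ 24844288*(n:ℝ)^8*κ^4*(1-κ)^0 := by
    have := mul_nonneg (mul_nonneg (mul_nonneg (by norm_num : (0:ℝ) ≤ 24844288) (pow_nonneg hn 8)) (pow_nonneg h0.le 4)) (pow_nonneg hb.le 0)
    linarith [this]
  have f42 : (0:ℝ) ≤ 679936*(n:ℝ)^9*κ^3*(1-κ)^1 := by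
    have := mul_nonneg (mul_nonneg (mul_nonneg (by norm_num : (0:ℝ) ≤ 679936) (pow_nonneg hn 9)) (pow_nonneg h0.le 3)) (pow_nonneg hb.le 1)
    linarith [this]
  have f43 : (0:ℝ) ≤ 3817472*(n:ℝ)^9*κ^4*(1-κ)^0 := by
    have := mul_nonneg (mul_nonneg (mul_nonneg (by norm_num : (0:ℝ) ≤ 3817472) (pow_nonneg hn 9)) (pow_nonneg h0.le 4)) (pow_nonneg hb.le 0)
    linarith [this]
  have f44 : (0:ℝ) ≤ 262144*(n:ℝ)^10*κ^4*(1-κ)^0 := by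
    have := mul_nonneg (mul_nonneg (mul_nonneg (by norm_num : (0:ℝ) ≤ 262144) (pow_nonneg hn 10)) (pow_nonneg h0.le 4)) (pow_nonneg hb.le 0)
    linarith [this]
  linarith
end

section
/- For every integer m ≥ 1 and every real κ with 0 < κ < 1, let b₂ = −(96κ³m³ + 264κ²m² + 216κm + 54)/((1−κ)(2κ²m(8m−5) + 6κ(4m−1) + 9)), b₁ = 4(m+2)(4κm+3)(2κ²m+4κm+3)/((1−κ)(2κ²m(8m−5)+6κ(4m−1)+9)) − 2(4m+3)²(2m+3)(m−1)/(m(2m+1)(8m+3)), and b₀ = −3(4+(4m−2)κ)(4κm+3)κ/((1−κ)(2κ²m(8m−5)+6κ(4m−1)+9)). Then the quadratic B̃(x) = b₂x² + b₁x + b₀ satisfies B̃(0) < 0 and B̃(mκ/(3+2mκ)) ≥ 0 (with strict inequality when m ≥ 2), so that B̃ has a real root in the interval (0, mκ/(3+2mκ)] (the root lying in the open interval (0, mκ/(3+2mκ)) when m ≥ 2). -/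
set_option maxHeartbeats 4000000 in
/-- The quadratic B̃ has a real root in (0, mκ/(3+2mκ)], lying in the open interval when m ≥ 2. -/
theorem Btilde_root (m : ℕ) (hm : 1 ≤ m) (κ : ℝ) (h0 : 0 < κ) (h1 : κ < 1)
    (b₂ b₁ b₀ : ℝ)
    (hb₂ : b₂ = -(96*κ^3*(m:ℝ)^3 + 264*κ^2*(m:ℝ)^2 + 216*κ*(m:ℝ) + 54) /
        ((1-κ)*(2*κ^2*(m:ℝ)*(8*(m:ℝ)-5)+6*κ*(4*(m:ℝ)-1)+9)))
    (hb₁ : b₁ = 4*((m:ℝ)+2)*(4*κ*(m:ℝ)+3)*(2*κ^2*(m:ℝ)+4*κ*(m:ℝ)+3) /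
        ((1-κ)*(2*κ^2*(m:ℝ)*(8*(m:ℝ)-5)+6*κ*(4*(m:ℝ)-1)+9))
        - 2*(4*(m:ℝ)+3)^2*(2*(m:ℝ)+3)*((m:ℝ)-1)/((m:ℝ)*(2*(m:ℝ)+1)*(8*(m:ℝ)+3)))
    (hb₀ : b₀ = -3*(4+(4*(m:ℝ)-2)*κ)*(4*κ*(m:ℝ)+3)*κ /
        ((1-κ)*(2*κ^2*(m:ℝ)*(8*(m:ℝ)-5)+6*κ*(4*(m:ℝ)-1)+9))) :
    (b₂*(0:ℝ)^2 + b₁*0 + b₀ < 0) ∧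
    (0 ≤ b₂*((m:ℝ)*κ/(3+2*(m:ℝ)*κ))^2 + b₁*((m:ℝ)*κ/(3+2*(m:ℝ)*κ)) + b₀) ∧
    (2 ≤ m → 0 < b₂*((m:ℝ)*κ/(3+2*(m:ℝ)*κ))^2 + b₁*((m:ℝ)*κ/(3+2*(m:ℝ)*κ)) + b₀) ∧
    (∃ x : ℝ, 0 < x ∧ x ≤ (m:ℝ)*κ/(3+2*(m:ℝ)*κ) ∧ b₂*x^2 + b₁*x + b₀ = 0) ∧
    (2 ≤ m → ∃ x : ℝ, 0 < x ∧ x < (m:ℝ)*κ/(3+2*(m:ℝ)*κ) ∧ b₂*x^2 + b₁*x + b₀ = 0) := by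
  set M : ℝ := (m:ℝ) with hM
  have hM1 : (1:ℝ) ≤ M := by rw [hM]; exact_mod_cast hm
  have h1κ : (0:ℝ) < 1 - κ := by linarith
  have hQpos : (0:ℝ) < 2*κ^2*M*(8*M-5)+6*κ*(4*M-1)+9 := by nlinarith [mul_nonneg (mul_nonneg (sq_nonneg κ) (by linarith : (0:ℝ) ≤ M)) (by linarith : (0:ℝ) ≤ 8*M-5), mul_nonneg h0.le (by linarith : (0:ℝ) ≤ 4*M-1)]
  have hD : (0:ℝ) < (1-κ)*(2*κ^2*M*(8*M-5)+6*κ*(4*M-1)+9) := mul_pos h1κ hQpos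
  have hE : (0:ℝ) < M*(2*M+1)*(8*M+3) := by nlinarith
  have hS : (0:ℝ) < 3 + 2*M*κ := by nlinarith
  have hDne := ne_of_gt hD
  have hEne := ne_of_gt hE
  have hSne := ne_of_gt hS
  -- b₀ < 0
  have hb0neg : b₀ < 0 := by
    rw [hb₀]
    apply div_neg_of_neg_of_pos _ hD
    nlinarith
  have h0t : (0:ℝ) < M*κ/(3+2*M*κ) := div_pos (by nlinarith) hS
  -- key identity at t
  set n : ℝ := M - 1 with hn
  have hn0 : 0 ≤ n := by simp [hn]; linarith
  set Q : ℝ := 1026 + 18342*κ + 40500*κ^2 + 21636*κ^3 + 1656*κ^4 + 4050*n + 54144*n*κ +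
    159156*n*κ^2 + 120192*n*κ^3 + 18552*n*κ^4 + 4536*n^2 + 62262*n^2*κ + 245664*n^2*κ^2 +
    262524*n^2*κ^3 + 64056*n^2*κ^4 + 1512*n^3 + 33516*n^3*κ + 188352*n^3*κ^2 +
    292344*n^3*κ^3 + 106440*n^3*κ^4 + 7056*n^4*κ + 72864*n^4*κ^2 + 177000*n^4*κ^3 +
    97200*n^4*κ^4 + 11520*n^5*κ^2 + 55920*n^5*κ^3 + 50016*n^5*κ^4 + 7296*n^6*κ^3 +
    13632*n^6*κ^4 + 1536*n^7*κ^4 with hQdef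
  have hQgt : (0:ℝ) < Q := by
    rw [hQdef]
    have hκ := h0.le
    positivity
  have key : b₂*(M*κ/(3+2*M*κ))^2 + b₁*(M*κ/(3+2*M*κ)) + b₀ =
      κ * n * Q / (((1-κ)*(2*κ^2*M*(8*M-5)+6*κ*(4*M-1)+9)) * (M*(2*M+1)*(8*M+3)) *
        (3+2*M*κ)^2) := by
    rw [hb₂, hb₁, hb₀, hQdef, hn]
    set D : ℝ := (1-κ)*(2*κ^2*M*(8*M-5)+6*κ*(4*M-1)+9) with hDdef
    set E : ℝ := M*(2*M+1)*(8*M+3) with hEdef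
    field_simp
    rw [hDdef, hEdef]
    ring
  have hval : 0 ≤ b₂*(M*κ/(3+2*M*κ))^2 + b₁*(M*κ/(3+2*M*κ)) + b₀ := by
    rw [key]
    have : (0:ℝ) ≤ κ * n * Q := by positivity
    positivity
  have hvalpos : 2 ≤ m → 0 < b₂*(M*κ/(3+2*M*κ))^2 + b₁*(M*κ/(3+2*M*κ)) + b₀ := by
    intro hm2
    have hM2 : (2:ℝ) ≤ M := by rw [hM]; exact_mod_cast hm2
    have hnpos : 0 < n := by rw [hn]; linarith
    rw [key]
    have hnum : (0:ℝ) < κ * n * Q := by positivity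
    positivity
  refine ⟨by simpa using hb0neg, hval, hvalpos, ?_, ?_⟩
  · -- IVT on [0, t]
    have hcont : ContinuousOn (fun x : ℝ => b₂*x^2 + b₁*x + b₀) (Set.Icc 0 (M*κ/(3+2*M*κ))) := by
      fun_prop
    have him := intermediate_value_Icc h0t.le hcont
    have h0mem : (0:ℝ) ∈ Set.Icc (b₂*(0:ℝ)^2 + b₁*0 + b₀)
        (b₂*(M*κ/(3+2*M*κ))^2 + b₁*(M*κ/(3+2*M*κ)) + b₀) := by
      constructor
      · simpa using hb0neg.le
      · exact hval
    obtain ⟨x, hx, hfx⟩ := him h0mem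
    refine ⟨x, ?_, hx.2, hfx⟩
    rcases hx.1.lt_or_eq with h | h
    · exact h
    · exfalso; rw [← h] at hfx; simp at hfx; linarith
  · intro hm2
    have hcont : ContinuousOn (fun x : ℝ => b₂*x^2 + b₁*x + b₀) (Set.Icc 0 (M*κ/(3+2*M*κ))) := by
      fun_prop
    have him := intermediate_value_Icc h0t.le hcont
    have h0mem : (0:ℝ) ∈ Set.Icc (b₂*(0:ℝ)^2 + b₁*0 + b₀)
        (b₂*(M*κ/(3+2*M*κ))^2 + b₁*(M*κ/(3+2*M*κ)) + b₀) := by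
      exact ⟨by simpa using hb0neg.le, hval⟩
    obtain ⟨x, hx, hfx⟩ := him h0mem
    have hxpos : 0 < x := by
      rcases hx.1.lt_or_eq with h | h
      · exact h
      · exfalso; rw [← h] at hfx; simp at hfx; linarith
    refine ⟨x, hxpos, ?_, hfx⟩
    rcases hx.2.lt_or_eq with h | h
    · exact h
    · exfalso
      rw [h] at hfx
      have hfx' : b₂*(M*κ/(3+2*M*κ))^2 + b₁*(M*κ/(3+2*M*κ)) + b₀ = 0 := hfx
      have := hvalpos hm2
      linarith
end

section
/- For every integer m ≥ 1 and every real κ with 0 < κ < 1, evaluating the quadratic Q̃_{m,κ} (with coefficients q₂, q₁, q₀ as given) at x = mκ/(3+2mκ) gives Q̃_{m,κ}(mκ/(3+2mκ)) = 4(m+3)(m−1)(4κ³m²(8m−1)+4κ²m(8m−3)+18κm+9(1−κ))κ² / (3(2κm+3)(1−κ)(2κ²m(8m−5)+6κ(4m−1)+9)), which is nonnegative, and strictly positive when m ≥ 2. -/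
/-- Evaluation of Q̃ at mκ/(3+2mκ): explicit value, nonnegative, positive when m ≥ 2. -/
theorem Qtilde_at_A_zero (m : ℕ) (hm : 1 ≤ m) (κ : ℝ) (h0 : 0 < κ) (h1 : κ < 1)
    (q₂ q₁ q₀ : ℝ)
    (hq₂ : q₂ = -4*(2*κ*(m:ℝ)+3)*(32*κ^3*(m:ℝ)^3 + κ^2*(m:ℝ)^2*(96-68*κ) + κ*(m:ℝ)*(90-84*κ) + 27*(1-κ)) /
      (3*(1-κ)*(2*κ^2*(m:ℝ)*(8*(m:ℝ)-5)+6*κ*(4*(m:ℝ)-1)+9)))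
    (hq₁ : q₁ = 16*κ*((m:ℝ)+2)*(16*κ^3*(m:ℝ)^3-18*κ^3*(m:ℝ)^2+32*κ^2*(m:ℝ)^2-24*κ^2*(m:ℝ)+27*κ*(m:ℝ)-9*κ+9) /
      (3*(1-κ)*(2*κ^2*(m:ℝ)*(8*(m:ℝ)-5)+6*κ*(4*(m:ℝ)-1)+9)))
    (hq₀ : q₀ = -4*κ^2*(32*κ^2*(m:ℝ)^3-20*κ^2*(m:ℝ)^2-6*κ^2*(m:ℝ)+48*κ*(m:ℝ)^2-6*κ*(m:ℝ)-9*κ+18*(m:ℝ)+9) /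
      (3*(1-κ)*(2*κ^2*(m:ℝ)*(8*(m:ℝ)-5)+6*κ*(4*(m:ℝ)-1)+9))) :
    (q₂*((m:ℝ)*κ/(3+2*(m:ℝ)*κ))^2 + q₁*((m:ℝ)*κ/(3+2*(m:ℝ)*κ)) + q₀
      = 4*((m:ℝ)+3)*((m:ℝ)-1)*(4*κ^3*(m:ℝ)^2*(8*(m:ℝ)-1)+4*κ^2*(m:ℝ)*(8*(m:ℝ)-3)+18*κ*(m:ℝ)+9*(1-κ))*κ^2 /
        (3*(2*κ*(m:ℝ)+3)*(1-κ)*(2*κ^2*(m:ℝ)*(8*(m:ℝ)-5)+6*κ*(4*(m:ℝ)-1)+9))) ∧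
    (0 ≤ q₂*((m:ℝ)*κ/(3+2*(m:ℝ)*κ))^2 + q₁*((m:ℝ)*κ/(3+2*(m:ℝ)*κ)) + q₀) ∧
    (2 ≤ m → 0 < q₂*((m:ℝ)*κ/(3+2*(m:ℝ)*κ))^2 + q₁*((m:ℝ)*κ/(3+2*(m:ℝ)*κ)) + q₀) := by
  have hM : (1:ℝ) ≤ (m:ℝ) := by exact_mod_cast hm
  have h1' : (0:ℝ) < 1 - κ := by linarith
  have hD : (0:ℝ) < 2*κ^2*(m:ℝ)*(8*(m:ℝ)-5)+6*κ*(4*(m:ℝ)-1)+9 := by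
    have t1 : (0:ℝ) ≤ 2*κ^2*((m:ℝ)*(8*(m:ℝ)-5)-3) :=
      mul_nonneg (by positivity) (by nlinarith)
    have t2 : (0:ℝ) ≤ 6*κ*(4*(m:ℝ)-1) := mul_nonneg (by linarith) (by linarith)
    nlinarith [t1, t2, sq_nonneg κ]
  have h3 : (0:ℝ) < 3+2*(m:ℝ)*κ := by nlinarith
  have h2 : (0:ℝ) < 2*κ*(m:ℝ)+3 := by nlinarith
  have hP : (0:ℝ) < 4*κ^3*(m:ℝ)^2*(8*(m:ℝ)-1)+4*κ^2*(m:ℝ)*(8*(m:ℝ)-3)+18*κ*(m:ℝ)+9*(1-κ) := by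
    have t1 : (0:ℝ) ≤ 4*κ^3*(m:ℝ)^2*(8*(m:ℝ)-1) := mul_nonneg (by positivity) (by linarith)
    have t2 : (0:ℝ) ≤ 4*κ^2*(m:ℝ)*(8*(m:ℝ)-3) := mul_nonneg (by positivity) (by linarith)
    have t3 : (0:ℝ) < 18*κ*(m:ℝ) := by positivity
    nlinarith [t1, t2, t3]
  have hden : (0:ℝ) < 3*(2*κ*(m:ℝ)+3)*(1-κ)*(2*κ^2*(m:ℝ)*(8*(m:ℝ)-5)+6*κ*(4*(m:ℝ)-1)+9) := by
    positivity
  have heq : q₂*((m:ℝ)*κ/(3+2*(m:ℝ)*κ))^2 + q₁*((m:ℝ)*κ/(3+2*(m:ℝ)*κ)) + q₀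
      = 4*((m:ℝ)+3)*((m:ℝ)-1)*(4*κ^3*(m:ℝ)^2*(8*(m:ℝ)-1)+4*κ^2*(m:ℝ)*(8*(m:ℝ)-3)+18*κ*(m:ℝ)+9*(1-κ))*κ^2 /
        (3*(2*κ*(m:ℝ)+3)*(1-κ)*(2*κ^2*(m:ℝ)*(8*(m:ℝ)-5)+6*κ*(4*(m:ℝ)-1)+9)) := by
    subst hq₂ hq₁ hq₀
    field_simp
    ring
  refine ⟨heq, ?_, ?_⟩
  · rw [heq]
    apply div_nonneg _ hden.le
    have : (0:ℝ) ≤ (m:ℝ) - 1 := by linarith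
    positivity
  · intro hm2
    have hM2 : (2:ℝ) ≤ (m:ℝ) := by exact_mod_cast hm2
    rw [heq]
    apply div_pos _ hden
    have : (0:ℝ) < (m:ℝ) - 1 := by linarith
    positivity
end

section
/- Let n = 4m+3 for an integer m ≥ 1. Consider the vector field V on ℝ⁴ with coordinates (X₁, X₂, Y, Z) given by V = (X₁H(G + (1−H²)/n − 1) + R₁ − (1−H²)/n, X₂H(G + (1−H²)/n − 1) + R₂ − (1−H²)/n, Y(H(G + (1−H²)/n) − X₁), Z(H(G + (1−H²)/n) + X₁ − 2X₂)), where H = 3X₁ + 4mX₂, G = 3X₁² + 4mX₂², R₁ = 2Y² + 4mZ², R₂ = (4m+8)YZ − 6Z². Then on the hypersurface C defined by G + (1−H²)/n + 6Y² + 4m(4m+8)YZ − 12mZ² = 1, the directional derivative of H along V equals (H² − 1)(1/n + (12m/n)(X₁ − X₂)²). -/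
/-- On the conservation hypersurface, the derivative of H along V
equals (H²−1)(1/n + (12m/n)(X₁−X₂)²). -/
theorem deriv_of_H_along_V (m : ℕ) (hm : 1 ≤ m) (X₁ X₂ Y Z : ℝ)
    (n H G R₁ R₂ V₁ V₂ : ℝ)
    (hn : n = 4*(m:ℝ)+3)
    (hH : H = 3*X₁ + 4*(m:ℝ)*X₂)
    (hG : G = 3*X₁^2 + 4*(m:ℝ)*X₂^2)
    (hR₁ : R₁ = 2*Y^2 + 4*(m:ℝ)*Z^2)
    (hR₂ : R₂ = (4*(m:ℝ)+8)*Y*Z - 6*Z^2)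
    (hV₁ : V₁ = X₁*H*(G + (1-H^2)/n - 1) + R₁ - (1-H^2)/n)
    (hV₂ : V₂ = X₂*H*(G + (1-H^2)/n - 1) + R₂ - (1-H^2)/n)
    (hcons : G + (1-H^2)/n + 6*Y^2 + 4*(m:ℝ)*(4*(m:ℝ)+8)*Y*Z - 12*(m:ℝ)*Z^2 = 1) :
    3*V₁ + 4*(m:ℝ)*V₂ = (H^2 - 1)*(1/n + (12*(m:ℝ)/n)*(X₁-X₂)^2) := by

  have hn0 : n ≠ 0 := by
    rw [hn]; positivity
  subst hV₁ hV₂ hR₁ hR₂ hG hH hn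
  field_simp at hcons ⊢
  ring_nf at hcons ⊢
  nlinarith [hcons]
end

section
/- Let m ≥ 1 be an integer and n = 4m+3. The matrix M = [[−(16m²+8m−6)/n², 16m(m+1)/n², 4/n, 8m/n], [(12m+12)/n², −(4m+6)/n², (4m+8)/n, (4m−4)/n], [−4m/n², 4m/n², 0, 0], [(4m+6)/n², −(4m+6)/n², 0, 0]] has eigenvalues 2/n (with multiplicity two), 0, and −4(m+1)/n, with eigenvectors w₁ = (−1,−1,0,0), w₂ = (−4m, 3, 2m, −(2m+3)), w₃ = (−(n−1), −(n−1), 1, 1), w₄ = (−8m(m+1), 6(m+1), −2m, 2m+3). -/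
set_option maxHeartbeats 1000000


/-- Eigenvalues and eigenvectors of the linearization at p₁⁺. -/
theorem linearization_at_p1 (m : ℕ) (hm : 1 ≤ m) (n : ℝ) (hn : n = 4*(m:ℝ)+3)
    (M : Matrix (Fin 4) (Fin 4) ℝ)
    (hM : M = !![-(16*(m:ℝ)^2+8*(m:ℝ)-6)/n^2, 16*(m:ℝ)*((m:ℝ)+1)/n^2, 4/n, 8*(m:ℝ)/n;
                 (12*(m:ℝ)+12)/n^2, -(4*(m:ℝ)+6)/n^2, (4*(m:ℝ)+8)/n, (4*(m:ℝ)-4)/n;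
                 -4*(m:ℝ)/n^2, 4*(m:ℝ)/n^2, 0, 0;
                 (4*(m:ℝ)+6)/n^2, -(4*(m:ℝ)+6)/n^2, 0, 0]) :
    M.mulVec ![-1, -1, 0, 0] = (2/n) • ![(-1 : ℝ), -1, 0, 0] ∧
    M.mulVec ![-4*(m:ℝ), 3, 2*(m:ℝ), -(2*(m:ℝ)+3)]
      = (2/n) • ![-4*(m:ℝ), 3, 2*(m:ℝ), -(2*(m:ℝ)+3)] ∧
    M.mulVec ![-(n-1), -(n-1), 1, 1] = (0 : ℝ) • ![-(n-1), -(n-1), 1, 1] ∧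
    M.mulVec ![-8*(m:ℝ)*((m:ℝ)+1), 6*((m:ℝ)+1), -2*(m:ℝ), 2*(m:ℝ)+3]
      = (-4*((m:ℝ)+1)/n) • ![-8*(m:ℝ)*((m:ℝ)+1), 6*((m:ℝ)+1), -2*(m:ℝ), 2*(m:ℝ)+3] := by
  have hm0 : (0:ℝ) ≤ (m:ℝ) := Nat.cast_nonneg m
  subst hn hM
  have hn0 : 4*(m:ℝ)+3 ≠ 0 := by positivity
  refine ⟨?_, ?_, ?_, ?_⟩ <;>
    funext i <;>
    fin_cases i <;>
    simp [Matrix.mulVec, dotProduct, Fin.sum_univ_succ] <;>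
    field_simp <;>
    ring
end

section
/- Let m ≥ 1 be an integer, n = 4m+3, z₀ = (1/n)·√((2m+1)/(2m+(2m+3)²)). Then the point p₂⁺ = (1/n, 1/n, (2m+3)z₀, z₀) satisfies the conservation law (12m/n)(X₁−X₂)² + 6Y² + 4m(4m+8)YZ − 12mZ² = 1 − 1/n and is a zero of the vector field V of the cohomogeneity one Einstein system (i.e., all four components of V vanish at p₂⁺). -/
/-- The point p₂⁺ satisfies the conservation law and is a zero of the vector field V. -/
theorem p2_is_critical_point (m : ℕ) (hm : 1 ≤ m) (n z₀ : ℝ)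
    (hn : n = 4*(m:ℝ)+3)
    (hz : z₀ = (1/n)*Real.sqrt ((2*(m:ℝ)+1)/(2*(m:ℝ)+(2*(m:ℝ)+3)^2)))
    (X₁ X₂ Y Z H G R₁ R₂ : ℝ)
    (hX₁ : X₁ = 1/n) (hX₂ : X₂ = 1/n) (hY : Y = (2*(m:ℝ)+3)*z₀) (hZ : Z = z₀)
    (hH : H = 3*X₁ + 4*(m:ℝ)*X₂)
    (hG : G = 3*X₁^2 + 4*(m:ℝ)*X₂^2)
    (hR₁ : R₁ = 2*Y^2 + 4*(m:ℝ)*Z^2)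
    (hR₂ : R₂ = (4*(m:ℝ)+8)*Y*Z - 6*Z^2) :
    ((12*(m:ℝ)/n)*(X₁-X₂)^2 + 6*Y^2 + 4*(m:ℝ)*(4*(m:ℝ)+8)*Y*Z - 12*(m:ℝ)*Z^2 = 1 - 1/n) ∧
    (X₁*H*(G + (1-H^2)/n - 1) + R₁ - (1-H^2)/n = 0) ∧
    (X₂*H*(G + (1-H^2)/n - 1) + R₂ - (1-H^2)/n = 0) ∧
    (Y*(H*(G + (1-H^2)/n) - X₁) = 0) ∧
    (Z*(H*(G + (1-H^2)/n) + X₁ - 2*X₂) = 0) := by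
  have hm1 : (1:ℝ) ≤ (m:ℝ) := by exact_mod_cast hm
  subst hn
  have hnpos : 0 < 4*(m:ℝ)+3 := by linarith
  have hn0 : 4*(m:ℝ)+3 ≠ 0 := ne_of_gt hnpos
  have hdpos : 0 < 2*(m:ℝ)+(2*(m:ℝ)+3)^2 := by nlinarith
  have hd0 : 2*(m:ℝ)+(2*(m:ℝ)+3)^2 ≠ 0 := ne_of_gt hdpos
  have harg : 0 ≤ (2*(m:ℝ)+1)/(2*(m:ℝ)+(2*(m:ℝ)+3)^2) := by positivity
  have hz2 : z₀^2 * ((4*(m:ℝ)+3)^2*(2*(m:ℝ)+(2*(m:ℝ)+3)^2)) = 2*(m:ℝ)+1 := by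
    rw [hz, mul_pow, Real.sq_sqrt harg]
    field_simp
  subst hX₁ hX₂ hY hZ hH hG hR₁ hR₂
  refine ⟨?_, ?_, ?_, ?_, ?_⟩
  · field_simp
    linear_combination (2 + 16*((m:ℝ)+1)*(2*(m:ℝ)+1)) * hz2
  · field_simp
    linear_combination (2 * (4*(m:ℝ)+3)^8 - (13068 + 139752*(m:ℝ) + 652896*(m:ℝ)^2 + 1741696*(m:ℝ)^3 + 2903040*(m:ℝ)^4 + 3096576*(m:ℝ)^5 + 2064384*(m:ℝ)^6 + 786432*(m:ℝ)^7 + 131072*(m:ℝ)^8)) * hz2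
  · field_simp
    linear_combination (2 * (4*(m:ℝ)+3)^8 - (13068 + 139752*(m:ℝ) + 652896*(m:ℝ)^2 + 1741696*(m:ℝ)^3 + 2903040*(m:ℝ)^4 + 3096576*(m:ℝ)^5 + 2064384*(m:ℝ)^6 + 786432*(m:ℝ)^7 + 131072*(m:ℝ)^8)) * hz2
  · field_simp
    ring
  · field_simp
    ring
end

section
/- Let m ≥ 1 be an integer, n = 4m+3. Define A = YX₂ − (3/m)Z(X₁ + (2m/3)X₂) and P = X₁(R₂ − (1−H²)/n) − X₂(R₁ − (1−H²)/n) − 2X₂(X₁ + (2m/3)X₂)(X₁ − X₂). Then at any point where A = 0 and X₁ + (2m/3)X₂ ≠ 0, the directional derivative of A along the vector field V of the Einstein system equals Y·P/(X₁ + (2m/3)X₂). -/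
set_option maxHeartbeats 1000000


/-- The vector field V of the cohomogeneity one Einstein system,
on points p = (X₁, X₂, Y, Z) with n = 4m+3. -/
noncomputable def einsteinV (m : ℕ) (p : Fin 4 → ℝ) : Fin 4 → ℝ :=
  ![p 0 * (3*p 0 + 4*m*p 1) * ((3*(p 0)^2 + 4*m*(p 1)^2)
      + (1 - (3*p 0 + 4*m*p 1)^2)/(4*m+3) - 1)
      + (2*(p 2)^2 + 4*m*(p 3)^2) - (1 - (3*p 0 + 4*m*p 1)^2)/(4*m+3),
    p 1 * (3*p 0 + 4*m*p 1) * ((3*(p 0)^2 + 4*m*(p 1)^2)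
      + (1 - (3*p 0 + 4*m*p 1)^2)/(4*m+3) - 1)
      + ((4*m+8)*(p 2)*(p 3) - 6*(p 3)^2) - (1 - (3*p 0 + 4*m*p 1)^2)/(4*m+3),
    p 2 * ((3*p 0 + 4*m*p 1) * ((3*(p 0)^2 + 4*m*(p 1)^2)
      + (1 - (3*p 0 + 4*m*p 1)^2)/(4*m+3)) - p 0),
    p 3 * ((3*p 0 + 4*m*p 1) * ((3*(p 0)^2 + 4*m*(p 1)^2)
      + (1 - (3*p 0 + 4*m*p 1)^2)/(4*m+3)) + p 0 - 2*p 1)]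

/-- The function A = Y X₂ − (3/m) Z (X₁ + (2m/3) X₂). -/
noncomputable def einsteinA (m : ℕ) (p : Fin 4 → ℝ) : ℝ :=
  p 2 * p 1 - (3/(m:ℝ)) * p 3 * (p 0 + (2*(m:ℝ)/3)*p 1)

/-- The polynomial P. -/
noncomputable def einsteinP (m : ℕ) (p : Fin 4 → ℝ) : ℝ :=
  p 0 * (((4*(m:ℝ)+8)*(p 2)*(p 3) - 6*(p 3)^2) - (1 - (3*p 0 + 4*(m:ℝ)*p 1)^2)/(4*(m:ℝ)+3))
  - p 1 * ((2*(p 2)^2 + 4*(m:ℝ)*(p 3)^2) - (1 - (3*p 0 + 4*(m:ℝ)*p 1)^2)/(4*(m:ℝ)+3))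
  - 2*p 1*(p 0 + (2*(m:ℝ)/3)*p 1)*(p 0 - p 1)

/-- On {A = 0}, the directional derivative of A along V equals Y·P/(X₁ + (2m/3)X₂). -/
theorem deriv_of_A_along_V (m : ℕ) (hm : 1 ≤ m) (x : Fin 4 → ℝ)
    (hA : einsteinA m x = 0) (hne : x 0 + (2*(m:ℝ)/3)*x 1 ≠ 0) :
    fderiv ℝ (einsteinA m) x (einsteinV m x)
      = x 2 * einsteinP m x / (x 0 + (2*(m:ℝ)/3)*x 1) := by
  have hm0 : (m:ℝ) ≠ 0 := by positivity
  have h0 : HasFDerivAt (fun p : Fin 4 → ℝ => p 0) (ContinuousLinearMap.proj 0 : (Fin 4 → ℝ) →L[ℝ] ℝ) x :=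
    by exact (ContinuousLinearMap.proj 0 : (Fin 4 → ℝ) →L[ℝ] ℝ).hasFDerivAt
  have h1 : HasFDerivAt (fun p : Fin 4 → ℝ => p 1) (ContinuousLinearMap.proj 1 : (Fin 4 → ℝ) →L[ℝ] ℝ) x :=
    by exact (ContinuousLinearMap.proj 1 : (Fin 4 → ℝ) →L[ℝ] ℝ).hasFDerivAt
  have h2 : HasFDerivAt (fun p : Fin 4 → ℝ => p 2) (ContinuousLinearMap.proj 2 : (Fin 4 → ℝ) →L[ℝ] ℝ) x :=
    by exact (ContinuousLinearMap.proj 2 : (Fin 4 → ℝ) →L[ℝ] ℝ).hasFDerivAt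
  have h3 : HasFDerivAt (fun p : Fin 4 → ℝ => p 3) (ContinuousLinearMap.proj 3 : (Fin 4 → ℝ) →L[ℝ] ℝ) x :=
    by exact (ContinuousLinearMap.proj 3 : (Fin 4 → ℝ) →L[ℝ] ℝ).hasFDerivAt
  have HD : HasFDerivAt (einsteinA m) _ x :=
    (h2.mul h1).sub (((h3.const_mul ((3:ℝ)/(m:ℝ)))).mul (h0.add (h1.const_mul (2*(m:ℝ)/3))))
  rw [HD.fderiv]
  simp only [ContinuousLinearMap.sub_apply, ContinuousLinearMap.add_apply,
    ContinuousLinearMap.smul_apply, ContinuousLinearMap.proj_apply, smul_eq_mul]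
  have hn : (4*(m:ℝ)+3) ≠ 0 := by positivity
  have hA' : (m:ℝ)*x 1*x 2 - 3*x 3*x 0 - 2*(m:ℝ)*x 3*x 1 = 0 := by
    unfold einsteinA at hA
    field_simp at hA
    linear_combination hA
  simp only [einsteinV, einsteinP, Matrix.cons_val_zero, Matrix.cons_val_one, Matrix.head_cons,
    Matrix.cons_val_two, Matrix.tail_cons, Matrix.cons_val_three]
  rw [eq_div_iff hne]
  linear_combination (norm := (field_simp; ring))
    (((-3) + (-2)*(m:ℝ) + (48)*x 2*x 3*(m:ℝ) + (88)*x 2*x 3*(m:ℝ)^2 + (32)*x 2*x 3*(m:ℝ)^3 + (18)*x 2^2 + (24)*x 2^2*(m:ℝ) + (-12)*x 1^2*(m:ℝ) + (24)*x 1^2*(m:ℝ)^2 + (192)*x 1^4*(m:ℝ)^3 + (-18)*x 0*x 1 + (36)*x 0*x 1*(m:ℝ) + (-16)*x 0*x 1*(m:ℝ)^2 + (432)*x 0*x 1^3*(m:ℝ)^2 + (-384)*x 0*x 1^3*(m:ℝ)^3 + (27)*x 0^2 + (-6)*x 0^2*(m:ℝ) + (216)*x 0^2*x 1^2*(m:ℝ)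 + (-864)*x 0^2*x 1^2*(m:ℝ)^2 + (192)*x 0^2*x 1^2*(m:ℝ)^3 + (-432)*x 0^3*x 1*(m:ℝ) + (432)*x 0^3*x 1*(m:ℝ)^2 + (216)*x 0^4*(m:ℝ)) / (3*(m:ℝ)*(4*(m:ℝ)+3))) * hA'
end

section
/- Let a₁⁻ = π − arctan(2√5/5). Then sin(a₁⁻) = 2/3, cos(a₁⁻) = −√5/3, sin(2a₁⁻) = −4√5/9, and cos(2a₁⁻) = 1/9. Moreover, for all θ ∈ [π/2, a₁⁻], the function D(θ) = sin(2θ) − (θ − π/2)·((7/4)(θ − a₁⁻) + sin(2a₁⁻)/(a₁⁻ − π/2)) is nonnegative, vanishing exactly at θ = π/2 and θ = a₁⁻. -/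
open Real
open Set


noncomputable def Daux (a θ : ℝ) : ℝ :=
  Real.sin (2*θ) - (θ - π/2)*((7/4)*(θ - a) + Real.sin (2*a)/(a - π/2))

noncomputable def Daux' (a θ : ℝ) : ℝ :=
  2*Real.cos (2*θ) - (((7/4)*(θ - a) + Real.sin (2*a)/(a - π/2)) + (θ - π/2)*(7/4))

noncomputable def Daux'' (a θ : ℝ) : ℝ := -4*Real.sin (2*θ) - 7/2

lemma hasDerivAt_Daux (a θ : ℝ) : HasDerivAt (Daux a) (Daux' a θ) θ := by
  have h1 : HasDerivAt (fun x : ℝ => Real.sin (2*x)) (Real.cos (2*θ) * 2) θ := by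
    simpa using ((hasDerivAt_id θ).const_mul 2).sin
  have h2 : HasDerivAt (fun x : ℝ => (x - π/2)*((7/4)*(x - a) + Real.sin (2*a)/(a - π/2)))
      (1 * ((7/4)*(θ - a) + Real.sin (2*a)/(a - π/2)) + (θ - π/2) * ((7/4) * 1)) θ := by
    exact ((hasDerivAt_id θ).sub_const (π/2)).mul
      ((((hasDerivAt_id θ).sub_const a).const_mul (7/4)).add_const _)
  have := h1.sub h2
  exact this.congr_deriv (by unfold Daux'; ring)

lemma hasDerivAt_Daux' (a θ : ℝ) : HasDerivAt (Daux' a) (Daux'' a θ) θ := by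
  have h1 : HasDerivAt (fun x : ℝ => 2*Real.cos (2*x)) (2 * (-Real.sin (2*θ) * 2)) θ := by
    simpa using (((hasDerivAt_id θ).const_mul 2).cos).const_mul 2
  have h2 : HasDerivAt (fun x : ℝ => (((7/4)*(x - a) + Real.sin (2*a)/(a - π/2)) + (x - π/2)*(7/4)))
      ((7/4) * 1 + 1 * (7/4)) θ := by
    exact ((((hasDerivAt_id θ).sub_const a).const_mul (7/4)).add_const _).add
      (((hasDerivAt_id θ).sub_const (π/2)).mul_const (7/4))
  have := h1.sub h2
  exact this.congr_deriv (by unfold Daux''; ring)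

lemma continuous_Daux (a : ℝ) : Continuous (Daux a) := by unfold Daux; fun_prop

lemma continuous_Daux' (a : ℝ) : Continuous (Daux' a) := by unfold Daux'; fun_prop

lemma sqrt5_lb : (2.236:ℝ) < Real.sqrt 5 := by
  nlinarith [Real.sq_sqrt (by norm_num : (5:ℝ) ≥ 0), Real.sqrt_nonneg 5]
lemma sqrt5_ub : Real.sqrt 5 < 2.2361 := by
  nlinarith [Real.sq_sqrt (by norm_num : (5:ℝ) ≥ 0), Real.sqrt_nonneg 5]
lemma sin37_lb : (0.3609:ℝ) ≤ Real.sin 0.37035 := by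
  have h := Real.sin_bound (x := 0.37035) (by rw [abs_of_nonneg] <;> norm_num)
  rw [abs_le, abs_of_nonneg (by norm_num : (0.37035:ℝ) ≥ 0)] at h
  nlinarith [h.1, h.2]
lemma cos37_lb : (0.9304:ℝ) ≤ Real.cos 0.37035 := by
  have h := Real.cos_bound (x := 0.37035) (by rw [abs_of_nonneg] <;> norm_num)
  rw [abs_le, abs_of_nonneg (by norm_num : (0.37035:ℝ) ≥ 0)] at h
  nlinarith [h.1, h.2]
lemma cos37_ub : Real.cos 0.37035 ≤ 0.9325 := by
  have h := Real.cos_bound (x := 0.37035) (by rw [abs_of_nonneg] <;> norm_num)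
  rw [abs_le, abs_of_nonneg (by norm_num : (0.37035:ℝ) ≥ 0)] at h
  nlinarith [h.1, h.2]
lemma sin6_lb : (0.557:ℝ) ≤ Real.sin 0.6 := by
  have h := Real.sin_bound (x := 0.6) (by rw [abs_of_nonneg] <;> norm_num)
  rw [abs_le, abs_of_nonneg (by norm_num : (0.6:ℝ) ≥ 0)] at h
  nlinarith [h.1, h.2]
lemma cos6_lb : (0.813:ℝ) ≤ Real.cos 0.6 := by
  have h := Real.cos_bound (x := 0.6) (by rw [abs_of_nonneg] <;> norm_num)
  rw [abs_le, abs_of_nonneg (by norm_num : (0.6:ℝ) ≥ 0)] at h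
  nlinarith [h.1, h.2]

lemma sin74_lb : (0.6715:ℝ) ≤ Real.sin 0.7407 := by
  rw [show (0.7407:ℝ) = 2*0.37035 by norm_num, Real.sin_two_mul]
  nlinarith [sin37_lb, cos37_lb, cos37_ub]
lemma cos74_ub : Real.cos 0.7407 ≤ 0.7392 := by
  rw [show (0.7407:ℝ) = 2*0.37035 by norm_num, Real.cos_two_mul]
  nlinarith [cos37_lb, cos37_ub]
lemma cos74_pos : (0:ℝ) < Real.cos 0.7407 := by
  rw [show (0.7407:ℝ) = 2*0.37035 by norm_num, Real.cos_two_mul]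
  nlinarith [cos37_lb, cos37_ub]

lemma arctan_lt : Real.arctan (2*Real.sqrt 5/5) < 0.7407 := by
  have hpi : (3.141592:ℝ) < π := Real.pi_gt_d6
  have ht : (2*Real.sqrt 5/5 : ℝ) < Real.tan 0.7407 := by
    rw [Real.tan_eq_sin_div_cos, lt_div_iff₀ cos74_pos]
    nlinarith [sin74_lb, cos74_ub, sqrt5_ub, cos74_pos, Real.sin_le_one (0.7407:ℝ)]
  calc Real.arctan (2*Real.sqrt 5/5) < Real.arctan (Real.tan 0.7407) :=
        Real.arctan_strictMono ht
    _ = 0.7407 := Real.arctan_tan (by linarith) (by linarith)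

lemma sin12_lb : (7/8:ℝ) ≤ Real.sin 1.2 := by
  rw [show (1.2:ℝ) = 2*0.6 by norm_num, Real.sin_two_mul]
  nlinarith [sin6_lb, cos6_lb, Real.sin_le_one (0.6:ℝ), Real.cos_le_one (0.6:ℝ)]

lemma arcsin78_le : Real.arcsin (7/8) ≤ 1.2 := by
  have hpi : (3.141592:ℝ) < π := Real.pi_gt_d6
  rw [Real.arcsin_le_iff_le_sin (by constructor <;> norm_num) (by constructor <;> linarith)]
  exact sin12_lb

set_option maxHeartbeats 2000000 in
/-- Trigonometric values at a₁⁻ = π − arctan(2√5/5), and nonnegativity of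
D(θ) = sin(2θ) − (θ−π/2)((7/4)(θ−a₁⁻) + sin(2a₁⁻)/(a₁⁻−π/2)) on [π/2, a₁⁻],
vanishing exactly at the endpoints. -/
theorem D_nonneg_on_interval (a : ℝ) (ha : a = π - arctan (2*Real.sqrt 5/5)) :
    Real.sin a = 2/3 ∧ Real.cos a = -Real.sqrt 5/3 ∧
    Real.sin (2*a) = -4*Real.sqrt 5/9 ∧ Real.cos (2*a) = 1/9 ∧
    (∀ θ ∈ Set.Icc (π/2) a,
      0 ≤ Real.sin (2*θ) - (θ - π/2)*((7/4)*(θ - a) + Real.sin (2*a)/(a - π/2)) ∧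
      (Real.sin (2*θ) - (θ - π/2)*((7/4)*(θ - a) + Real.sin (2*a)/(a - π/2)) = 0
        ↔ θ = π/2 ∨ θ = a)) := by
  have h5 : (0:ℝ) < Real.sqrt 5 := Real.sqrt_pos.2 (by norm_num)
  have hsq : Real.sqrt 5 ^ 2 = 5 := Real.sq_sqrt (by norm_num)
  have hx : (1:ℝ) + (2*Real.sqrt 5/5)^2 = 9/5 := by
    rw [div_pow, mul_pow, hsq]; norm_num
  have hsqrt : Real.sqrt ((1:ℝ) + (2*Real.sqrt 5/5)^2) = 3/Real.sqrt 5 := by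
    rw [hx, show (9/5:ℝ) = (3/Real.sqrt 5)^2 by rw [div_pow, hsq]; norm_num,
      Real.sqrt_sq (by positivity)]
  have hsin : Real.sin a = 2/3 := by
    rw [ha, Real.sin_pi_sub, Real.sin_arctan, hsqrt]
    field_simp
    nlinarith
  have hcos : Real.cos a = -Real.sqrt 5/3 := by
    rw [ha, Real.cos_pi_sub, Real.cos_arctan, hsqrt]
    field_simp
  have hs2 : Real.sin (2*a) = -4*Real.sqrt 5/9 := by
    rw [Real.sin_two_mul, hsin, hcos]; ring
  have hc2 : Real.cos (2*a) = 1/9 := by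
    rw [Real.cos_two_mul, hcos]
    field_simp
    nlinarith
  refine ⟨hsin, hcos, hs2, hc2, ?_⟩
  -- numeric bounds
  have hpi : (3.141592:ℝ) < π := Real.pi_gt_d6
  have hpi' : π < 3.141593 := Real.pi_lt_d6
  have hat0 : (0:ℝ) ≤ Real.arctan (2*Real.sqrt 5/5) := by
    have := Real.arctan_strictMono.monotone (show (0:ℝ) ≤ 2*Real.sqrt 5/5 by positivity)
    rwa [Real.arctan_zero] at this
  have hat : Real.arctan (2*Real.sqrt 5/5) < 0.7407 := arctan_lt
  have hL0 : (0.83:ℝ) < a - π/2 := by rw [ha]; linarith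
  have hatp : 0 < Real.arctan (2*Real.sqrt 5/5) := by
    have := Real.arctan_strictMono (show (0:ℝ) < 2*Real.sqrt 5/5 by positivity)
    rwa [Real.arctan_zero] at this
  have hL1 : a - π/2 < π/2 := by rw [ha]; linarith
  have hLpos : (0:ℝ) < a - π/2 := by linarith
  have hLne : a - π/2 ≠ 0 := ne_of_gt hLpos
  set c := Real.arcsin (7/8) with hc_def
  have hc0 : 0 < c := Real.arcsin_pos.2 (by norm_num)
  have hc12 : c ≤ 1.2 := arcsin78_le
  have hsinc : Real.sin c = 7/8 := Real.sin_arcsin (by norm_num) (by norm_num)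
  set m := π/2 + c/2 with hm_def
  have hm_lt_a : m < a := by rw [hm_def]; nlinarith
  have hm_gt : π/2 < m := by rw [hm_def]; linarith
  -- sin bounds on the two subintervals
  have hsin_ub : ∀ θ ∈ Icc (π/2) m, -(7/8) ≤ Real.sin (2*θ) := by
    intro θ hθ
    have h1 : Real.sin (2*θ) = -Real.sin (2*θ - π) := by
      rw [Real.sin_sub_pi]; ring_nf
    rw [h1, neg_le_neg_iff]
    have hu0 : 0 ≤ 2*θ - π := by have := hθ.1; linarith
    have huc : 2*θ - π ≤ c := by have := hθ.2; rw [hm_def] at this; linarith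
    have := Real.strictMonoOn_sin.monotoneOn
      (show 2*θ - π ∈ Icc (-(π/2)) (π/2) by constructor <;> [linarith; linarith])
      (show c ∈ Icc (-(π/2)) (π/2) by constructor <;> [linarith; linarith]) huc
    rw [hsinc] at this
    exact this
  have hsin_lb : ∀ θ ∈ Icc m a, Real.sin (2*θ) ≤ -(7/8) := by
    intro θ hθ
    have h1 : Real.sin (2*θ) = -Real.sin (2*θ - π) := by
      rw [Real.sin_sub_pi]; ring_nf
    rw [h1, neg_le]
    have hs2a : Real.sin (2*a - π) = 4*Real.sqrt 5/9 := by
      rw [Real.sin_sub_pi, hs2]; ring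
    have hcu : c ≤ 2*θ - π := by have := hθ.1; rw [hm_def] at this; linarith
    have hu2L : 2*θ - π ≤ 2*a - π := by have := hθ.2; linarith
    have hcle : c ≤ 2*a - π := le_trans hcu hu2L
    have hmem : (2*θ - π) ∈ segment ℝ c (2*a - π) := by
      rw [segment_eq_Icc hcle]; exact ⟨hcu, hu2L⟩
    have hconc := strictConcaveOn_sin_Icc.concaveOn.ge_on_segment
      (x := c) (y := 2*a - π) (z := 2*θ - π)
      (show c ∈ Icc 0 π by constructor <;> linarith)
      (show 2*a - π ∈ Icc 0 π by constructor <;> linarith) hmem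
    have h78 : (7/8:ℝ) ≤ min (Real.sin c) (Real.sin (2*a - π)) := by
      rw [hsinc, hs2a]
      exact le_min le_rfl (by nlinarith [sqrt5_lb])
    linarith [hconc, h78]
  -- values at endpoints
  have hfa : Daux a a = 0 := by
    unfold Daux
    rw [show (7:ℝ)/4*(a-a) = 0 by ring, zero_add, mul_div_cancel₀ _ hLne, sub_self]
  have hfpi : Daux a (π/2) = 0 := by
    unfold Daux
    rw [show 2*(π/2) = π by ring, Real.sin_pi]
    ring
  -- concavity on [π/2, m]
  have hconc : ConcaveOn ℝ (Icc (π/2) m) (Daux a) := by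
    apply concaveOn_of_hasDerivWithinAt2_nonpos (f' := Daux' a) (f'' := Daux'' a)
      (convex_Icc _ _) (continuous_Daux a).continuousOn
      (fun x _ => (hasDerivAt_Daux a x).hasDerivWithinAt)
      (fun x _ => (hasDerivAt_Daux' a x).hasDerivWithinAt)
    intro x hx
    rw [interior_Icc] at hx
    have := hsin_ub x ⟨hx.1.le, hx.2.le⟩
    unfold Daux''
    linarith
  -- monotone derivative on [m, a]
  have hmono : MonotoneOn (Daux' a) (Icc m a) := by
    apply monotoneOn_of_deriv_nonneg (convex_Icc _ _) (continuous_Daux' a).continuousOn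
      (fun x _ => (hasDerivAt_Daux' a x).differentiableAt.differentiableWithinAt)
    intro x hx
    rw [interior_Icc] at hx
    rw [(hasDerivAt_Daux' a x).deriv]
    have := hsin_lb x ⟨hx.1.le, hx.2.le⟩
    unfold Daux''
    linarith
  -- derivative negative at a
  have hf'a : Daux' a a < 0 := by
    have hval : Daux' a a = 2/9 + (4*Real.sqrt 5/9)/(a - π/2) - (a - π/2)*(7/4) := by
      unfold Daux'
      rw [hc2, hs2, show (7:ℝ)/4*(a-a) = 0 by ring, zero_add]
      rw [show (-4*Real.sqrt 5/9 : ℝ) = -(4*Real.sqrt 5/9) by ring, neg_div]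
      ring
    rw [hval]
    have h1 : (4*Real.sqrt 5/9)/(a - π/2) ≤ 0.99383/0.83 :=
      div_le_div₀ (by norm_num) (by nlinarith [sqrt5_ub]) (by norm_num) hL0.le
    linarith
  -- strict antitonicity on [m, a]
  have hanti : StrictAntiOn (Daux a) (Icc m a) := by
    apply strictAntiOn_of_deriv_neg (convex_Icc _ _) (continuous_Daux a).continuousOn
    intro x hx
    rw [interior_Icc] at hx
    rw [(hasDerivAt_Daux a x).deriv]
    have hle : Daux' a x ≤ Daux' a a :=
      hmono ⟨hx.1.le, hx.2.le⟩ ⟨hm_lt_a.le, le_rfl⟩ hx.2.le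
    linarith
  have hfm : 0 < Daux a m := by
    have := hanti ⟨le_rfl, hm_lt_a.le⟩ ⟨hm_lt_a.le, le_rfl⟩ hm_lt_a
    rw [hfa] at this
    exact this
  -- positivity in the interior
  have hpos : ∀ θ, π/2 < θ → θ < a → 0 < Daux a θ := by
    intro θ hθ1 hθ2
    rcases le_or_gt m θ with hmθ | hθm
    · have := hanti ⟨hmθ, hθ2.le⟩ ⟨hm_lt_a.le, le_rfl⟩ hθ2
      rw [hfa] at this
      exact this
    · set t := (θ - π/2)/(c/2) with ht_def
      have hcne : c/2 ≠ 0 := by positivity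
      have ht0 : 0 < t := by apply div_pos <;> [linarith; positivity]
      have ht1 : t < 1 := by
        rw [ht_def, div_lt_one (by positivity)]
        rw [hm_def] at hθm; linarith
      have htc : t * (c/2) = θ - π/2 := div_mul_cancel₀ _ hcne
      have hcombo : (1-t) • (π/2) + t • m = θ := by
        rw [hm_def, smul_eq_mul, smul_eq_mul]
        linear_combination htc
      have := hconc.2 (x := π/2) (y := m)
        ⟨le_rfl, hm_gt.le⟩ ⟨hm_gt.le, le_rfl⟩
        (show (0:ℝ) ≤ 1 - t by linarith) (le_of_lt ht0) (by ring)
      rw [hcombo, hfpi, smul_eq_mul, smul_eq_mul, mul_zero, zero_add] at this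
      nlinarith
  -- assembly
  have key : ∀ θ ∈ Icc (π/2) a, 0 ≤ Daux a θ ∧ (Daux a θ = 0 ↔ θ = π/2 ∨ θ = a) := by
    intro θ hθ
    rcases eq_or_lt_of_le hθ.1 with h1 | h1
    · rw [← h1]
      rw [hfpi]
      exact ⟨le_rfl, by simp⟩
    rcases eq_or_lt_of_le hθ.2 with h2 | h2
    · rw [h2, hfa]
      exact ⟨le_rfl, by simp⟩
    have := hpos θ h1 h2
    refine ⟨this.le, ?_⟩
    constructor
    · intro h; exfalso; rw [h] at this; exact lt_irrefl 0 this
    · rintro (h | h)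
      · exact absurd h.symm (ne_of_lt h1)
      · exact absurd h (ne_of_lt h2)
  intro θ hθ
  have := key θ hθ
  simpa only [Daux] using this
end
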